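/- An ordered abelian group G is densely ordered if and only if: either the value set of the natural valuation on G has no last element, or it has a last element γ and the corresponding archimedean component B_γ = G^γ / G_γ is densely ordered. -/

import Mathlib

/-- An ordered abelian group `G` is densely ordered iff either the value set of the natural
valuation has no last element (every nonzero `g` admits a nonzero `h` archimedean strictly
smaller than `g`), or it has a last element `γ` (witnessed by a nonzero `g` archimedean
smaller-or-equivalent to every nonzero element) and the corresponding archimedean component
`B_γ = G^γ / G_γ` is densely ordered (here `G_γ = {0}` and `G^γ = {x : ∃ n, |x| ≤ n•|g|}`,
so `B_γ` is identified with the convex subgroup `G^γ`). -/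
theorem stmt_8 {G : Type*} [AddCommGroup G] [LinearOrder G] [IsOrderedAddMonoid G] :
    DenselyOrdered G ↔
      ((∀ g : G, g ≠ 0 → ∃ h : G, h ≠ 0 ∧ ∀ n : ℕ, n • |h| < |g|) ∨
       (∃ g : G, g ≠ 0 ∧ (∀ h : G, h ≠ 0 → ∃ n : ℕ, |g| ≤ n • |h|) ∧
         (∀ a b : G, (∃ n : ℕ, |a| ≤ n • |g|) → (∃ n : ℕ, |b| ≤ n • |g|) →
           a < b → ∃ c : G, (∃ n : ℕ, |c| ≤ n • |g|) ∧ a < c ∧ c < b))) := by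
  constructor
  · intro hD
    by_cases h1 : ∀ g : G, g ≠ 0 → ∃ h : G, h ≠ 0 ∧ ∀ n : ℕ, n • |h| < |g|
    · exact Or.inl h1
    · right
      push_neg at h1
      obtain ⟨g, hg0, hg⟩ := h1
      refine ⟨g, hg0, fun h hh => ?_, fun a b ⟨n, ha⟩ ⟨m, hb⟩ hab => ?_⟩
      · exact hg h hh
      · obtain ⟨c, hac, hcb⟩ := hD.dense a b hab
        refine ⟨c, ⟨n + m, ?_⟩, hac, hcb⟩
        have hc : |c| ≤ |a| + |b| := by
          rw [abs_le]
          constructor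
          · have h2 : -c ≤ |a| := le_trans (neg_le_neg hac.le) (neg_le_abs a)
            exact neg_le.mp (h2.trans (le_add_of_nonneg_right (abs_nonneg b)))
          · have h2 : c ≤ |b| := le_trans hcb.le (le_abs_self b)
            exact h2.trans (le_add_of_nonneg_left (abs_nonneg a))
        calc |c| ≤ |a| + |b| := hc
          _ ≤ n • |g| + m • |g| := add_le_add ha hb
          _ = (n + m) • |g| := (add_nsmul _ n m).symm
  · rintro (h | ⟨g, hg0, _, hdense⟩) <;> constructor <;> intro a b hab
    · have hd : b - a ≠ 0 := sub_ne_zero.mpr hab.ne'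
      obtain ⟨h1, hh0, hh⟩ := h (b - a) hd
      have h1lt : |h1| < |b - a| := by simpa using hh 1
      have habs : |b - a| = b - a := abs_of_pos (sub_pos.mpr hab)
      refine ⟨a + |h1|, ?_, ?_⟩
      · exact lt_add_of_pos_right a (abs_pos.mpr hh0)
      · rw [habs] at h1lt; exact lt_sub_iff_add_lt'.mp h1lt
    · have hgpos : (0:G) < |g| := abs_pos.mpr hg0
      set e := min |g| (b - a) with he
      have hepos : 0 < e := lt_min hgpos (sub_pos.mpr hab)
      have heg : |e| ≤ 1 • |g| := by
        rw [one_nsmul, abs_of_pos hepos]; exact min_le_left _ _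
      obtain ⟨c, hc, h0c, hce⟩ := hdense 0 e ⟨0, by simp⟩ ⟨1, heg⟩ hepos
      refine ⟨a + c, lt_add_of_pos_right a h0c, ?_⟩
      have h3 : c < b - a := lt_of_lt_of_le hce (min_le_right _ _)
      exact lt_sub_iff_add_lt'.mp h3
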